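/- Let G be a mono-C3-free edge-colored complete graph K_n. Let S and Y be vertex-disjoint subgraphs of G such that S = u_1 u_2 u_3 u_1 is a triangle with u_2 u_3 being a center edge and Y is either a nice shovel or a vertex set of size at most 2. Then G contains a properly colored path P = z_1 z_2 ⋯ z_ℓ such that V(P) = V(S) ∪ V(Y), z_1 = u_1, and col(z_1 z_2) ∈ {col(u_1 u_2), col(u_1 u_3)}. -/

import Mathlib

/-- An edge-coloring of `K_n` (on vertex set `Fin n`) has no monochromatic triangle. -/
def MonoC3Free (n : ℕ) (c : Fin n → Fin n → ℕ) : Prop :=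
  ∀ u v w : Fin n, u ≠ v → v ≠ w → u ≠ w → ¬(c u v = c v w ∧ c u v = c u w)

/-- `p 0, p 1, …, p (t-1)` is a properly colored path on `t` vertices in the
edge-colored `K_n`: the vertices are distinct and consecutive edges get distinct colors. -/
def IsPCPath (n : ℕ) (c : Fin n → Fin n → ℕ) (p : ℕ → Fin n) (t : ℕ) : Prop :=
  Set.InjOn p (Set.Iio t) ∧
    ∀ j : ℕ, j + 3 ≤ t → c (p j) (p (j + 1)) ≠ c (p (j + 1)) (p (j + 2))

/-- A nice `t`-shovel in the edge-colored `K_n`: a triangle `p 0, u₂, u₃` together with a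
path `p 0, p 1, …, p (t-1)` on `t ≥ 1` vertices meeting the triangle exactly in `p 0`,
such that the path is properly colored, `u₂u₃` is a center edge of the triangle, and the
color of the first path edge (when the path has an edge) differs from the colors of both
triangle edges at `p 0`. -/
def IsNiceShovel (n : ℕ) (c : Fin n → Fin n → ℕ) (t : ℕ) (p : ℕ → Fin n)
    (u₂ u₃ : Fin n) : Prop :=
  1 ≤ t ∧ u₂ ≠ u₃ ∧ (∀ j < t, p j ≠ u₂ ∧ p j ≠ u₃) ∧
    IsPCPath n c p t ∧
    c u₂ u₃ ≠ c (p 0) u₂ ∧ c u₂ u₃ ≠ c (p 0) u₃ ∧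
    (2 ≤ t → c (p 0) (p 1) ≠ c (p 0) u₂ ∧ c (p 0) (p 1) ≠ c (p 0) u₃)

section Lemmas

set_option maxHeartbeats 1000000 in
lemma lemA (n : ℕ) (c : Fin n → Fin n → ℕ) (t : ℕ) (ht : 1 ≤ t)
    (q : ℕ → Fin n) (hq : IsPCPath n c q t)
    (z0 z1 z2 z3 z4 : Fin n)
    (d01 : z0 ≠ z1) (d02 : z0 ≠ z2) (d03 : z0 ≠ z3) (d04 : z0 ≠ z4)
    (d12 : z1 ≠ z2) (d13 : z1 ≠ z3) (d14 : z1 ≠ z4)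
    (d23 : z2 ≠ z3) (d24 : z2 ≠ z4) (d34 : z3 ≠ z4)
    (hq0 : ∀ i < t, q i ≠ z0) (hq1 : ∀ i < t, q i ≠ z1)
    (hq2 : ∀ i < t, q i ≠ z2) (hq3 : ∀ i < t, q i ≠ z3)
    (hq4 : ∀ i < t, q i ≠ z4)
    (e1 : c z0 z1 ≠ c z1 z2) (e2 : c z1 z2 ≠ c z2 z3) (e3 : c z2 z3 ≠ c z3 z4)
    (e4 : c z3 z4 ≠ c z4 (q 0)) (e5 : 2 ≤ t → c z4 (q 0) ≠ c (q 0) (q 1)) :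
    ∃ p : ℕ → Fin n, p 0 = z0 ∧ IsPCPath n c p (t + 5) ∧
      c (p 0) (p 1) = c z0 z1 ∧
      ∀ x : Fin n, (∃ j < t + 5, p j = x) ↔
        (x = z0 ∨ x = z1 ∨ x = z2 ∨ x = z3 ∨ x = z4 ∨ ∃ j < t, q j = x) := by
  classical
  set p : ℕ → Fin n := fun k =>
    if k = 0 then z0 else if k = 1 then z1 else if k = 2 then z2
    else if k = 3 then z3 else if k = 4 then z4 else q (k - 5) with hp
  have hp0 : p 0 = z0 := by simp [hp]
  have hp1 : p 1 = z1 := by simp [hp]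
  have hp2 : p 2 = z2 := by simp [hp]
  have hp3 : p 3 = z3 := by simp [hp]
  have hp4 : p 4 = z4 := by simp [hp]
  have hpq : ∀ k, 5 ≤ k → p k = q (k - 5) := by
    intro k hk
    simp only [hp]
    rw [if_neg (by omega), if_neg (by omega), if_neg (by omega), if_neg (by omega),
      if_neg (by omega)]
  refine ⟨p, hp0, ⟨?_, ?_⟩, by rw [hp0, hp1], ?_⟩
  · -- InjOn
    intro a ha b hb hab
    simp only [Set.mem_Iio] at ha hb
    by_contra hne
    -- helper to evaluate
    rcases Nat.lt_or_ge a 5 with ha5 | ha5 <;> rcases Nat.lt_or_ge b 5 with hb5 | hb5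
    · interval_cases a <;> interval_cases b <;>
        simp only [hp0, hp1, hp2, hp3, hp4] at hab <;>
        first
          | exact hne rfl
          | exact d01 hab | exact d01 hab.symm
          | exact d02 hab | exact d02 hab.symm
          | exact d03 hab | exact d03 hab.symm
          | exact d04 hab | exact d04 hab.symm
          | exact d12 hab | exact d12 hab.symm
          | exact d13 hab | exact d13 hab.symm
          | exact d14 hab | exact d14 hab.symm
          | exact d23 hab | exact d23 hab.symm
          | exact d24 hab | exact d24 hab.symm
          | exact d34 hab | exact d34 hab.symm
    · rw [hpq b hb5] at hab
      have hbt : b - 5 < t := by omega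
      interval_cases a <;> simp only [hp0, hp1, hp2, hp3, hp4] at hab
      · exact hq0 _ hbt hab.symm
      · exact hq1 _ hbt hab.symm
      · exact hq2 _ hbt hab.symm
      · exact hq3 _ hbt hab.symm
      · exact hq4 _ hbt hab.symm
    · rw [hpq a ha5] at hab
      have hat : a - 5 < t := by omega
      interval_cases b <;> simp only [hp0, hp1, hp2, hp3, hp4] at hab
      · exact hq0 _ hat hab
      · exact hq1 _ hat hab
      · exact hq2 _ hat hab
      · exact hq3 _ hat hab
      · exact hq4 _ hat hab
    · rw [hpq a ha5, hpq b hb5] at hab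
      have := hq.1 (by simp only [Set.mem_Iio]; omega : a - 5 ∈ Set.Iio t)
        (by simp only [Set.mem_Iio]; omega : b - 5 ∈ Set.Iio t) hab
      omega
  · -- PC
    intro j hj
    rcases Nat.lt_or_ge j 5 with hj5 | hj5
    · interval_cases j
      · rw [hp0, hp1, hp2]; exact e1
      · rw [hp1, hp2, hp3]; exact e2
      · rw [hp2, hp3, hp4]; exact e3
      · rw [hp3, hp4, hpq 5 (by omega)]; exact e4
      · rw [hp4, hpq 5 (by omega), hpq 6 (by omega)]
        exact e5 (by omega)
    · rw [hpq j hj5, hpq (j+1) (by omega), hpq (j+2) (by omega)]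
      have h1 : j + 1 - 5 = (j - 5) + 1 := by omega
      have h2 : j + 2 - 5 = (j - 5) + 2 := by omega
      rw [h1, h2]
      exact hq.2 (j - 5) (by omega)
  · -- coverage
    intro x
    constructor
    · rintro ⟨j, hj, rfl⟩
      rcases Nat.lt_or_ge j 5 with hj5 | hj5
      · interval_cases j <;> simp only [hp0, hp1, hp2, hp3, hp4] <;> tauto
      · rw [hpq j hj5]
        exact Or.inr (Or.inr (Or.inr (Or.inr (Or.inr ⟨j - 5, by omega, rfl⟩))))
    · rintro (rfl | rfl | rfl | rfl | rfl | ⟨j, hj, rfl⟩)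
      · exact ⟨0, by omega, hp0⟩
      · exact ⟨1, by omega, hp1⟩
      · exact ⟨2, by omega, hp2⟩
      · exact ⟨3, by omega, hp3⟩
      · exact ⟨4, by omega, hp4⟩
      · refine ⟨j + 5, by omega, ?_⟩
        rw [hpq (j+5) (by omega)]
        norm_num

set_option maxHeartbeats 1000000 in
lemma lemB (n : ℕ) (c : Fin n → Fin n → ℕ)
    (hsym : ∀ u v, c u v = c v u) (t : ℕ)
    (q : ℕ → Fin n) (hq : IsPCPath n c q t)
    (j : ℕ) (hj1 : 1 ≤ j) (hjt : j + 1 ≤ t)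
    (z0 z1 z2 z3 z4 : Fin n)   -- z0=u1, z1=ua, z2=wx, z3=wy, z4=ub
    (d01 : z0 ≠ z1) (d02 : z0 ≠ z2) (d03 : z0 ≠ z3) (d04 : z0 ≠ z4)
    (d12 : z1 ≠ z2) (d13 : z1 ≠ z3) (d14 : z1 ≠ z4)
    (d23 : z2 ≠ z3) (d24 : z2 ≠ z4) (d34 : z3 ≠ z4)
    (hq0 : ∀ i < t, q i ≠ z0) (hq1 : ∀ i < t, q i ≠ z1)
    (hq2 : ∀ i < t, q i ≠ z2) (hq3 : ∀ i < t, q i ≠ z3)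
    (hq4 : ∀ i < t, q i ≠ z4)
    (f1 : c z0 z1 ≠ c z1 z2) (f2 : c z1 z2 ≠ c z2 z3)
    (f3 : c z2 z3 ≠ c z3 (q 0)) (f4 : c z3 (q 0) ≠ c (q 0) (q 1))
    (hC : c (q (j - 1)) z4 = c (q (j - 1)) (q j))
    (hD : c (q j) z4 ≠ c (q (j - 1)) (q j))
    (hE : j + 2 ≤ t → c (q j) z4 ≠ c (q j) (q (j + 1))) :
    ∃ p : ℕ → Fin n, p 0 = z0 ∧ IsPCPath n c p (t + 5) ∧
      c (p 0) (p 1) = c z0 z1 ∧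
      ∀ x : Fin n, (∃ i < t + 5, p i = x) ↔
        (x = z0 ∨ x = z1 ∨ x = z2 ∨ x = z3 ∨ x = z4 ∨ ∃ i < t, q i = x) := by
  classical
  set p : ℕ → Fin n := fun k =>
    if k = 0 then z0 else if k = 1 then z1 else if k = 2 then z2
    else if k = 3 then z3 else if k ≤ j + 3 then q (k - 4)
    else if k = j + 4 then z4 else q (k - 5) with hp
  have hp0 : p 0 = z0 := by simp [hp]
  have hp1 : p 1 = z1 := by simp [hp]
  have hp2 : p 2 = z2 := by simp [hp]
  have hp3 : p 3 = z3 := by simp [hp]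
  have hpA : ∀ k, 4 ≤ k → k ≤ j + 3 → p k = q (k - 4) := by
    intro k h1 h2
    simp only [hp]
    rw [if_neg (by omega), if_neg (by omega), if_neg (by omega), if_neg (by omega),
      if_pos h2]
  have hpB : p (j + 4) = z4 := by
    simp only [hp]
    rw [if_neg (by omega), if_neg (by omega), if_neg (by omega), if_neg (by omega),
      if_neg (by omega)]
    simp
  have hpC : ∀ k, j + 5 ≤ k → p k = q (k - 5) := by
    intro k h1
    simp only [hp]
    rw [if_neg (by omega), if_neg (by omega), if_neg (by omega), if_neg (by omega),
      if_neg (by omega), if_neg (by omega)]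
  have hq4le : 4 ≤ j + 3 := by omega
  refine ⟨p, hp0, ⟨?_, ?_⟩, by rw [hp0, hp1], ?_⟩
  · -- InjOn
    intro a ha b hb hab
    simp only [Set.mem_Iio] at ha hb
    by_contra hne
    have prefq : ∀ a b, a < 4 → 4 ≤ b → b < t + 5 → b ≠ j + 4 → p a = p b → False := by
      intro a b ha4 hb4 hbt hbj hab
      have : ∃ i < t, p b = q i := by
        rcases le_or_gt b (j+3) with h | h
        · exact ⟨b - 4, by omega, hpA b hb4 h⟩
        · exact ⟨b - 5, by omega, hpC b (by omega)⟩
      obtain ⟨i, hi, hpb⟩ := this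
      rw [hpb] at hab
      interval_cases a <;> simp only [hp0, hp1, hp2, hp3] at hab
      exacts [hq0 i hi hab.symm, hq1 i hi hab.symm, hq2 i hi hab.symm, hq3 i hi hab.symm]
    have prefub : ∀ a, a < 4 → p a = p (j+4) → False := by
      intro a ha4 hab
      rw [hpB] at hab
      interval_cases a <;> simp only [hp0, hp1, hp2, hp3] at hab
      exacts [d04 hab, d14 hab, d24 hab, d34 hab]
    have ubq : ∀ b, 4 ≤ b → b < t + 5 → b ≠ j + 4 → p (j+4) = p b → False := by
      intro b hb4 hbt hbj hab
      have : ∃ i < t, p b = q i := by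
        rcases le_or_gt b (j+3) with h | h
        · exact ⟨b - 4, by omega, hpA b hb4 h⟩
        · exact ⟨b - 5, by omega, hpC b (by omega)⟩
      obtain ⟨i, hi, hpb⟩ := this
      rw [hpB, hpb] at hab
      exact hq4 i hi hab.symm
    have qq : ∀ a b, 4 ≤ a → 4 ≤ b → a < t + 5 → b < t + 5 → a ≠ j + 4 → b ≠ j + 4 →
        a ≠ b → p a = p b → False := by
      intro a b ha4 hb4 hat hbt haj hbj hne hab
      have ea : ∃ i < t, p a = q i ∧ ((a ≤ j + 3 ∧ i = a - 4) ∨ (j + 5 ≤ a ∧ i = a - 5)) := by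
        rcases le_or_gt a (j+3) with h | h
        · exact ⟨a - 4, by omega, hpA a ha4 h, Or.inl ⟨h, rfl⟩⟩
        · exact ⟨a - 5, by omega, hpC a (by omega), Or.inr ⟨by omega, rfl⟩⟩
      have eb : ∃ i < t, p b = q i ∧ ((b ≤ j + 3 ∧ i = b - 4) ∨ (j + 5 ≤ b ∧ i = b - 5)) := by
        rcases le_or_gt b (j+3) with h | h
        · exact ⟨b - 4, by omega, hpA b hb4 h, Or.inl ⟨h, rfl⟩⟩
        · exact ⟨b - 5, by omega, hpC b (by omega), Or.inr ⟨by omega, rfl⟩⟩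
      obtain ⟨ia, hia, hpa, hca⟩ := ea
      obtain ⟨ib, hib, hpb, hcb⟩ := eb
      rw [hpa, hpb] at hab
      have := hq.1 (by simp only [Set.mem_Iio]; exact hia)
        (by simp only [Set.mem_Iio]; exact hib) hab
      omega
    rcases lt_or_ge a 4 with ha4 | ha4 <;> rcases lt_or_ge b 4 with hb4 | hb4
    · interval_cases a <;> interval_cases b <;>
        simp only [hp0, hp1, hp2, hp3] at hab <;>
        first
          | exact hne rfl
          | exact d01 hab | exact d01 hab.symm
          | exact d02 hab | exact d02 hab.symm
          | exact d03 hab | exact d03 hab.symm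
          | exact d12 hab | exact d12 hab.symm
          | exact d13 hab | exact d13 hab.symm
          | exact d23 hab | exact d23 hab.symm
    · by_cases hbj : b = j + 4
      · exact prefub a ha4 (hbj ▸ hab)
      · exact prefq a b ha4 hb4 hb hbj hab
    · by_cases haj : a = j + 4
      · exact prefub b hb4 (haj ▸ hab.symm)
      · exact prefq b a hb4 ha4 ha haj hab.symm
    · by_cases haj : a = j + 4 <;> by_cases hbj : b = j + 4
      · exact hne (by omega)
      · exact ubq b hb4 hb hbj (haj ▸ hab)
      · exact ubq a ha4 ha haj (hbj ▸ hab.symm)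
      · exact qq a b ha4 hb4 ha hb haj hbj hne hab
  · -- PC
    intro k hk
    rcases lt_or_ge k 4 with hk4 | hk4
    · interval_cases k
      · rw [hp0, hp1, hp2]; exact f1
      · rw [hp1, hp2, hp3]; exact f2
      · rw [hp2, hp3]
        rw [show (2:ℕ)+2 = 4 by norm_num, hpA 4 le_rfl hq4le]
        norm_num
        exact f3
      · -- k = 3 : edges (z3, q0) and (q0, next)
        rw [hp3]
        rw [show (3:ℕ)+1 = 4 by norm_num, hpA 4 le_rfl hq4le]
        norm_num
        rcases eq_or_lt_of_le hj1 with hj' | hj'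
        · -- j = 1 : p 5 = z4
          rw [show (5:ℕ) = j + 4 by omega, hpB]
          have h0 : j - 1 = 0 := by omega
          have h1 : j = 1 := by omega
          rw [h0, h1] at hC
          rw [hC]
          exact f4
        · rw [hpA 5 (by omega) (by omega)]
          norm_num
          exact f4
    · rcases lt_or_ge k (j + 2) with hkj | hkj
      · -- block1 interior: k+2 ≤ j+3
        rw [hpA k (by omega) (by omega), hpA (k+1) (by omega) (by omega),
          hpA (k+2) (by omega) (by omega)]
        have := hq.2 (k - 4) (by omega)
        rw [show k - 4 + 1 = k + 1 - 4 by omega, show k - 4 + 2 = k + 2 - 4 by omega] at this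
        exact this
      rcases eq_or_lt_of_le hkj with hkj2 | hkj2
      · -- k = j + 2  (j ≥ 2 since k ≥ 4)
        rw [← hkj2] at hk ⊢
        rw [hpA (j+2) (by omega) (by omega), show j+2+1 = j+3 by omega,
          hpA (j+3) (by omega) (by omega), show j+3-4 = j-1 by omega,
          show j+2+2 = j+4 by omega, hpB, hC]
        have := hq.2 (j - 2) (by omega)
        rw [show j - 2 + 1 = j - 1 by omega, show j - 2 + 2 = j by omega,
          show j - 2 = j + 2 - 4 by omega] at this
        exact this
      rcases eq_or_lt_of_le (show j + 3 ≤ k by omega) with hkj3 | hkj3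
      · -- k = j + 3
        rw [← hkj3] at hk ⊢
        rw [hpA (j+3) (by omega) (by omega), show j+3+1 = j+4 by omega, hpB,
          show j+3+2 = j+5 by omega, hpC (j+5) le_rfl,
          show j+3-4 = j-1 by omega, show j+5-5 = j by omega, hC, hsym z4 (q j)]
        exact fun h => hD h.symm
      rcases eq_or_lt_of_le (show j + 4 ≤ k by omega) with hkj4 | hkj4
      · -- k = j + 4
        rw [← hkj4] at hk ⊢
        rw [hpB, show j+4+1 = j+5 by omega, hpC (j+5) le_rfl,
          show j+4+2 = j+6 by omega, hpC (j+6) (by omega),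
          show j+5-5 = j by omega, show j+6-5 = j+1 by omega, hsym z4 (q j)]
        exact hE (by omega)
      · -- k ≥ j + 5
        rw [hpC k (by omega), hpC (k+1) (by omega), hpC (k+2) (by omega)]
        have := hq.2 (k - 5) (by omega)
        rw [show k - 5 + 1 = k + 1 - 5 by omega, show k - 5 + 2 = k + 2 - 5 by omega] at this
        exact this
  · -- coverage
    intro x
    constructor
    · rintro ⟨k, hk, rfl⟩
      rcases lt_or_ge k 4 with h | h
      · interval_cases k <;> simp only [hp0, hp1, hp2, hp3] <;> tauto
      rcases le_or_gt k (j + 3) with h2 | h2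
      · rw [hpA k h h2]; exact Or.inr (Or.inr (Or.inr (Or.inr (Or.inr ⟨k - 4, by omega, rfl⟩))))
      rcases eq_or_lt_of_le (show j + 4 ≤ k by omega) with h3 | h3
      · rw [← h3, hpB]; tauto
      · rw [hpC k (by omega)]
        exact Or.inr (Or.inr (Or.inr (Or.inr (Or.inr ⟨k - 5, by omega, rfl⟩))))
    · rintro (rfl | rfl | rfl | rfl | rfl | ⟨i, hi, rfl⟩)
      · exact ⟨0, by omega, hp0⟩
      · exact ⟨1, by omega, hp1⟩
      · exact ⟨2, by omega, hp2⟩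
      · exact ⟨3, by omega, hp3⟩
      · exact ⟨j + 4, by omega, hpB⟩
      · rcases lt_or_ge i j with h | h
        · refine ⟨i + 4, by omega, ?_⟩
          rw [hpA (i+4) (by omega) (by omega)]
          norm_num
        · refine ⟨i + 5, by omega, ?_⟩
          rw [hpC (i+5) (by omega)]
          norm_num

lemma lemS3 (n : ℕ) (c : Fin n → Fin n → ℕ) (z0 z1 z2 : Fin n)
    (d01 : z0 ≠ z1) (d02 : z0 ≠ z2) (d12 : z1 ≠ z2)
    (e1 : c z0 z1 ≠ c z1 z2) :
    ∃ p : ℕ → Fin n, p 0 = z0 ∧ IsPCPath n c p 3 ∧ c (p 0) (p 1) = c z0 z1 ∧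
      ∀ x : Fin n, (∃ j < 3, p j = x) ↔ (x = z0 ∨ x = z1 ∨ x = z2) := by
  classical
  refine ⟨fun k => if k = 0 then z0 else if k = 1 then z1 else z2, rfl, ⟨?_, ?_⟩, by simp, ?_⟩
  · intro a ha b hb hab
    simp only [Set.mem_Iio] at ha hb
    interval_cases a <;> interval_cases b <;> simp_all
  · intro j hj
    have hj' : j = 0 := by omega
    subst hj'
    simpa using e1
  · intro x
    constructor
    · rintro ⟨j, hj, rfl⟩
      interval_cases j <;> simp
    · rintro (rfl | rfl | rfl)
      exacts [⟨0, by omega, rfl⟩, ⟨1, by omega, rfl⟩, ⟨2, by omega, rfl⟩]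

lemma lemS4 (n : ℕ) (c : Fin n → Fin n → ℕ) (z0 z1 z2 z3 : Fin n)
    (d01 : z0 ≠ z1) (d02 : z0 ≠ z2) (d03 : z0 ≠ z3)
    (d12 : z1 ≠ z2) (d13 : z1 ≠ z3) (d23 : z2 ≠ z3)
    (e1 : c z0 z1 ≠ c z1 z2) (e2 : c z1 z2 ≠ c z2 z3) :
    ∃ p : ℕ → Fin n, p 0 = z0 ∧ IsPCPath n c p 4 ∧ c (p 0) (p 1) = c z0 z1 ∧
      ∀ x : Fin n, (∃ j < 4, p j = x) ↔ (x = z0 ∨ x = z1 ∨ x = z2 ∨ x = z3) := by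
  classical
  refine ⟨fun k => if k = 0 then z0 else if k = 1 then z1 else if k = 2 then z2 else z3,
    rfl, ⟨?_, ?_⟩, by simp, ?_⟩
  · intro a ha b hb hab
    simp only [Set.mem_Iio] at ha hb
    interval_cases a <;> interval_cases b <;> simp_all
  · intro j hj
    have hj' : j < 2 := by omega
    interval_cases j
    · simpa using e1
    · simpa using e2
  · intro x
    constructor
    · rintro ⟨j, hj, rfl⟩
      interval_cases j <;> simp
    · rintro (rfl | rfl | rfl | rfl)
      exacts [⟨0, by omega, rfl⟩, ⟨1, by omega, rfl⟩, ⟨2, by omega, rfl⟩, ⟨3, by omega, rfl⟩]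

lemma lemS5 (n : ℕ) (c : Fin n → Fin n → ℕ) (z0 z1 z2 z3 z4 : Fin n)
    (d01 : z0 ≠ z1) (d02 : z0 ≠ z2) (d03 : z0 ≠ z3) (d04 : z0 ≠ z4)
    (d12 : z1 ≠ z2) (d13 : z1 ≠ z3) (d14 : z1 ≠ z4)
    (d23 : z2 ≠ z3) (d24 : z2 ≠ z4) (d34 : z3 ≠ z4)
    (e1 : c z0 z1 ≠ c z1 z2) (e2 : c z1 z2 ≠ c z2 z3) (e3 : c z2 z3 ≠ c z3 z4) :
    ∃ p : ℕ → Fin n, p 0 = z0 ∧ IsPCPath n c p 5 ∧ c (p 0) (p 1) = c z0 z1 ∧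
      ∀ x : Fin n, (∃ j < 5, p j = x) ↔ (x = z0 ∨ x = z1 ∨ x = z2 ∨ x = z3 ∨ x = z4) := by
  classical
  refine ⟨fun k => if k = 0 then z0 else if k = 1 then z1 else if k = 2 then z2
    else if k = 3 then z3 else z4, rfl, ⟨?_, ?_⟩, by simp, ?_⟩
  · intro a ha b hb hab
    simp only [Set.mem_Iio] at ha hb
    interval_cases a <;> interval_cases b <;> simp_all
  · intro j hj
    have hj' : j < 3 := by omega
    interval_cases j
    · simpa using e1
    · simpa using e2
    · simpa using e3
  · intro x
    constructor
    · rintro ⟨j, hj, rfl⟩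
      interval_cases j <;> simp
    · rintro (rfl | rfl | rfl | rfl | rfl)
      exacts [⟨0, by omega, rfl⟩, ⟨1, by omega, rfl⟩, ⟨2, by omega, rfl⟩,
        ⟨3, by omega, rfl⟩, ⟨4, by omega, rfl⟩]

lemma permA (a b c d e f : Prop) : (a ∨ b ∨ e ∨ c ∨ d ∨ f) ↔ (a ∨ b ∨ c ∨ d ∨ e ∨ f) := by tauto
lemma permB (a b c d e f : Prop) : (a ∨ c ∨ d ∨ b ∨ e ∨ f) ↔ (a ∨ b ∨ c ∨ d ∨ e ∨ f) := by tauto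
lemma permC (a b c d e f : Prop) : (a ∨ b ∨ d ∨ c ∨ e ∨ f) ↔ (a ∨ b ∨ c ∨ d ∨ e ∨ f) := by tauto
lemma permD (a b c d e f : Prop) : (a ∨ c ∨ e ∨ b ∨ d ∨ f) ↔ (a ∨ b ∨ c ∨ d ∨ e ∨ f) := by tauto
lemma permE (a b c d e f : Prop) : (a ∨ b ∨ d ∨ e ∨ c ∨ f) ↔ (a ∨ b ∨ c ∨ d ∨ e ∨ f) := by tauto
lemma permF (a b c d e f : Prop) : (a ∨ c ∨ e ∨ d ∨ b ∨ f) ↔ (a ∨ b ∨ c ∨ d ∨ e ∨ f) := by tauto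

set_option maxHeartbeats 1000000 in
lemma aux_main (n : ℕ) (c : Fin n → Fin n → ℕ)
    (hsym : ∀ u v, c u v = c v u) (hmono : MonoC3Free n c)
    (u₁ u₂ u₃ w₂ w₃ : Fin n) (t : ℕ) (ht : 1 ≤ t) (q : ℕ → Fin n)
    (hqPC : IsPCPath n c q t)
    (d12 : u₁ ≠ u₂) (d13 : u₁ ≠ u₃) (d23 : u₂ ≠ u₃) (dw : w₂ ≠ w₃)
    (d1w2 : u₁ ≠ w₂) (d1w3 : u₁ ≠ w₃) (d2w2 : u₂ ≠ w₂) (d2w3 : u₂ ≠ w₃)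
    (d3w2 : u₃ ≠ w₂) (d3w3 : u₃ ≠ w₃)
    (nq1 : ∀ i < t, q i ≠ u₁) (nq2 : ∀ i < t, q i ≠ u₂) (nq3 : ∀ i < t, q i ≠ u₃)
    (nqw2 : ∀ i < t, q i ≠ w₂) (nqw3 : ∀ i < t, q i ≠ w₃)
    (hc1 : c u₂ u₃ ≠ c u₁ u₂) (hc2 : c u₂ u₃ ≠ c u₁ u₃)
    (hs1 : c w₂ w₃ ≠ c (q 0) w₂) (hs2 : c w₂ w₃ ≠ c (q 0) w₃)
    (hnice : 2 ≤ t → c (q 0) (q 1) ≠ c (q 0) w₂ ∧ c (q 0) (q 1) ≠ c (q 0) w₃)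
    (hP1 : c u₂ w₂ = c u₂ u₃) (hP2 : c u₃ w₃ = c u₂ u₃)
    (hP3 : c u₂ w₃ = c w₂ w₃) (hP4 : c u₃ w₂ = c w₂ w₃)
    (hαδ : c u₂ u₃ ≠ c w₂ w₃) :
    ∃ p : ℕ → Fin n, p 0 = u₁ ∧ IsPCPath n c p (t + 5) ∧
      (c (p 0) (p 1) = c u₁ u₂ ∨ c (p 0) (p 1) = c u₁ u₃) ∧
      ∀ x : Fin n, (∃ j < t + 5, p j = x) ↔
        (x = u₁ ∨ x = u₂ ∨ x = u₃ ∨ x = w₂ ∨ x = w₃ ∨ ∃ j < t, q j = x) := by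
  classical
  -- Step 3a: first edge u₁u₂ ≠ δ
  by_cases h3a : c u₁ u₂ ≠ c w₂ w₃
  · obtain ⟨p, h0, hPC, hfe, hcov⟩ := lemA n c t ht q hqPC u₁ u₂ w₃ u₃ w₂
      d12 d1w3 d13 d1w2 d2w3 d23 d2w2 (Ne.symm d3w3) dw.symm d3w2
      nq1 nq2 nqw3 nq3 nqw2
      (by rw [hP3]; exact h3a)
      (by rw [hP3, hsym w₃ u₃, hP2]; exact fun h => hαδ h.symm)
      (by rw [hsym w₃ u₃, hP2, hP4]; exact hαδ)
      (by rw [hP4, hsym w₂ (q 0)]; exact hs1)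
      (fun h2 => by rw [hsym w₂ (q 0)]; exact fun h => (hnice h2).1 h.symm)
    exact ⟨p, h0, hPC, Or.inl (by rw [hfe]), fun x => (hcov x).trans (permA _ _ _ _ _ _)⟩
  push_neg at h3a
  by_cases h3b : c u₁ u₃ ≠ c w₂ w₃
  · obtain ⟨p, h0, hPC, hfe, hcov⟩ := lemA n c t ht q hqPC u₁ u₃ w₂ u₂ w₃
      d13 d1w2 d12 d1w3 d3w2 d23.symm d3w3 (Ne.symm d2w2) dw d2w3
      nq1 nq3 nqw2 nq2 nqw3
      (by rw [hP4]; exact h3b)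
      (by rw [hP4, hsym w₂ u₂, hP1]; exact fun h => hαδ h.symm)
      (by rw [hsym w₂ u₂, hP1, hP3]; exact hαδ)
      (by rw [hP3, hsym w₃ (q 0)]; exact hs2)
      (fun h2 => by rw [hsym w₃ (q 0)]; exact fun h => (hnice h2).2 h.symm)
    exact ⟨p, h0, hPC, Or.inr (by rw [hfe]), fun x => (hcov x).trans (permB _ _ _ _ _ _)⟩
  push_neg at h3b
  -- now c u₁u₂ = c u₁u₃ = δ
  -- Step 4a: c (q 0) w₃ ≠ α
  by_cases h4a : c (q 0) w₃ ≠ c u₂ u₃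
  · obtain ⟨p, h0, hPC, hfe, hcov⟩ := lemA n c t ht q hqPC u₁ u₂ w₂ u₃ w₃
      d12 d1w2 d13 d1w3 d2w2 d23 d2w3 (Ne.symm d3w2) dw d3w3
      nq1 nq2 nqw2 nq3 nqw3
      (by rw [hP1, h3a]; exact fun h => hαδ h.symm)
      (by rw [hP1, hsym w₂ u₃, hP4]; exact hαδ)
      (by rw [hsym w₂ u₃, hP4, hP2]; exact fun h => hαδ h.symm)
      (by rw [hP2, hsym w₃ (q 0)]; exact fun h => h4a h.symm)
      (fun h2 => by rw [hsym w₃ (q 0)]; exact fun h => (hnice h2).2 h.symm)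
    exact ⟨p, h0, hPC, Or.inl (by rw [hfe]), fun x => (hcov x).trans (permC _ _ _ _ _ _)⟩
  push_neg at h4a
  by_cases h4b : c (q 0) w₂ ≠ c u₂ u₃
  · obtain ⟨p, h0, hPC, hfe, hcov⟩ := lemA n c t ht q hqPC u₁ u₃ w₃ u₂ w₂
      d13 d1w3 d12 d1w2 d3w3 d23.symm d3w2 (Ne.symm d2w3) dw.symm d2w2
      nq1 nq3 nqw3 nq2 nqw2
      (by rw [hP2, h3b]; exact fun h => hαδ h.symm)
      (by rw [hP2, hsym w₃ u₂, hP3]; exact hαδ)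
      (by rw [hsym w₃ u₂, hP3, hP1]; exact fun h => hαδ h.symm)
      (by rw [hP1, hsym w₂ (q 0)]; exact fun h => h4b h.symm)
      (fun h2 => by rw [hsym w₂ (q 0)]; exact fun h => (hnice h2).1 h.symm)
    exact ⟨p, h0, hPC, Or.inr (by rw [hfe]), fun x => (hcov x).trans (permD _ _ _ _ _ _)⟩
  push_neg at h4b
  -- step 5 : c q0 w₂ = c q0 w₃ = α ; derive c u₂ q0 ≠ α, c u₃ q0 ≠ α
  have hq0w2 : (0:ℕ) < t := ht
  have monoF2 : c u₂ (q 0) ≠ c u₂ u₃ := by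
    have := hmono u₂ w₂ (q 0) d2w2 (fun h => nqw2 0 ht h.symm) (fun h => nq2 0 ht h.symm)
    rw [hP1, hsym w₂ (q 0), h4b] at this
    intro h
    exact this ⟨rfl, h.symm⟩
  have monoF3 : c u₃ (q 0) ≠ c u₂ u₃ := by
    have := hmono u₃ w₃ (q 0) d3w3 (fun h => nqw3 0 ht h.symm) (fun h => nq3 0 ht h.symm)
    rw [hP2, hsym w₃ (q 0), h4a] at this
    intro h
    exact this ⟨rfl, h.symm⟩
  by_cases ht2 : 2 ≤ t
  swap
  · -- t = 1 : unconditional Form C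
    obtain ⟨p, h0, hPC, hfe, hcov⟩ := lemA n c t ht q hqPC u₁ u₂ w₂ w₃ u₃
      d12 d1w2 d1w3 d13 d2w2 d2w3 d23 dw (Ne.symm d3w2) (Ne.symm d3w3)
      nq1 nq2 nqw2 nqw3 nq3
      (by rw [hP1, h3a]; exact fun h => hαδ h.symm)
      (by rw [hP1]; exact hαδ)
      (by rw [hsym w₃ u₃, hP2]; exact fun h => hαδ h.symm)
      (by rw [hsym w₃ u₃, hP2]; exact fun h => monoF3 h.symm)
      (fun h2 => absurd h2 ht2)
    exact ⟨p, h0, hPC, Or.inl (by rw [hfe]), fun x => (hcov x).trans (permE _ _ _ _ _ _)⟩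
  -- t ≥ 2, γ := c q0 q1
  have hγα : c (q 0) (q 1) ≠ c u₂ u₃ := by
    rw [← h4b]; exact (hnice ht2).1
  by_cases hy3 : c u₃ (q 0) ≠ c (q 0) (q 1)
  · obtain ⟨p, h0, hPC, hfe, hcov⟩ := lemA n c t ht q hqPC u₁ u₂ w₂ w₃ u₃
      d12 d1w2 d1w3 d13 d2w2 d2w3 d23 dw (Ne.symm d3w2) (Ne.symm d3w3)
      nq1 nq2 nqw2 nqw3 nq3
      (by rw [hP1, h3a]; exact fun h => hαδ h.symm)
      (by rw [hP1]; exact hαδ)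
      (by rw [hsym w₃ u₃, hP2]; exact fun h => hαδ h.symm)
      (by rw [hsym w₃ u₃, hP2]; exact fun h => monoF3 h.symm)
      (fun _ => hy3)
    exact ⟨p, h0, hPC, Or.inl (by rw [hfe]), fun x => (hcov x).trans (permE _ _ _ _ _ _)⟩
  push_neg at hy3
  by_cases hy2 : c u₂ (q 0) ≠ c (q 0) (q 1)
  · obtain ⟨p, h0, hPC, hfe, hcov⟩ := lemA n c t ht q hqPC u₁ u₃ w₃ w₂ u₂
      d13 d1w3 d1w2 d12 d3w3 d3w2 d23.symm dw.symm (Ne.symm d2w3) (Ne.symm d2w2)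
      nq1 nq3 nqw3 nqw2 nq2
      (by rw [hP2, h3b]; exact fun h => hαδ h.symm)
      (by rw [hP2, hsym w₃ w₂]; exact hαδ)
      (by rw [hsym w₃ w₂, hsym w₂ u₂, hP1]; exact fun h => hαδ h.symm)
      (by rw [hsym w₂ u₂, hP1]; exact fun h => monoF2 h.symm)
      (fun _ => hy2)
    exact ⟨p, h0, hPC, Or.inr (by rw [hfe]), fun x => (hcov x).trans (permF _ _ _ _ _ _)⟩
  push_neg at hy2
  -- STUCK CASE.  c u₂ q0 = c u₃ q0 = γ = c q0 q1.
  have hPex : ∃ j : ℕ, 1 ≤ j ∧ (j = t - 1 ∨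
      ¬ (c (q j) u₂ = c (q j) (q (j+1)) ∧ c (q j) u₃ = c (q j) (q (j+1)))) :=
    ⟨t - 1, by omega, Or.inl rfl⟩
  have hjspec := Nat.find_spec hPex
  have hjmin := fun m (hm : m < Nat.find hPex) => Nat.find_min hPex hm
  set j := Nat.find hPex with hjdef
  obtain ⟨hj1, hjP⟩ := hjspec
  have hjle : j ≤ t - 1 := Nat.find_le ⟨by omega, Or.inl rfl⟩
  have hjt : j + 1 ≤ t := by omega
  -- the "C(j-1)" facts
  have hqinj : q j ≠ q (j - 1) := by
    intro h
    have := hqPC.1 (by simp only [Set.mem_Iio]; omega : j ∈ Set.Iio t)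
      (by simp only [Set.mem_Iio]; omega : j - 1 ∈ Set.Iio t) h
    omega
  have hCu2 : c (q (j - 1)) u₂ = c (q (j - 1)) (q j) := by
    rcases eq_or_lt_of_le hj1 with h1 | h1
    · have e0 : j - 1 = 0 := by omega
      have e1 : j = 1 := by omega
      rw [e0, e1, ← hsym u₂ (q 0)]
      exact hy2
    · have hnP := hjmin (j - 1) (by omega)
      have hBad : c (q (j-1)) u₂ = c (q (j-1)) (q ((j-1)+1)) ∧
          c (q (j-1)) u₃ = c (q (j-1)) (q ((j-1)+1)) := by
        by_contra hcon
        exact hnP ⟨by omega, Or.inr hcon⟩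
      have e1 : j - 1 + 1 = j := by omega
      rw [e1] at hBad
      exact hBad.1
  have hCu3 : c (q (j - 1)) u₃ = c (q (j - 1)) (q j) := by
    rcases eq_or_lt_of_le hj1 with h1 | h1
    · have e0 : j - 1 = 0 := by omega
      have e1 : j = 1 := by omega
      rw [e0, e1, ← hsym u₃ (q 0)]
      exact hy3
    · have hnP := hjmin (j - 1) (by omega)
      have hBad : c (q (j-1)) u₂ = c (q (j-1)) (q ((j-1)+1)) ∧
          c (q (j-1)) u₃ = c (q (j-1)) (q ((j-1)+1)) := by
        by_contra hcon
        exact hnP ⟨by omega, Or.inr hcon⟩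
      have e1 : j - 1 + 1 = j := by omega
      rw [e1] at hBad
      exact hBad.2
  have hDgen : ∀ ub : Fin n, (∀ i < t, q i ≠ ub) →
      c (q (j - 1)) ub = c (q (j - 1)) (q j) →
      c (q j) ub ≠ c (q (j - 1)) (q j) := by
    intro ub hnqub hCub
    have hmj := hmono (q j) (q (j - 1)) ub hqinj
      (hnqub (j - 1) (by omega)) (hnqub j (by omega))
    intro h
    apply hmj
    constructor
    · rw [hsym (q j) (q (j - 1))]
      exact hCub.symm
    · rw [hsym (q j) (q (j - 1))]
      exact h.symm
  -- choose the inserted vertex ub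
  by_cases hb3 : c (q j) u₃ = c (q j) (q (j + 1))
  · -- u₃ blocked; try u₂
    by_cases hb2 : c (q j) u₂ = c (q j) (q (j + 1))
    · -- both blocked: then j = t - 1, insert u₃ with vacuous hE
      have hjt1 : j = t - 1 := by
        rcases hjP with h | h
        · exact h
        · exact absurd ⟨hb2, hb3⟩ h
      obtain ⟨p, h0, hPC, hfe, hcov⟩ := lemB n c hsym t q hqPC j hj1 hjt
        u₁ u₂ w₂ w₃ u₃
        d12 d1w2 d1w3 d13 d2w2 d2w3 d23 dw (Ne.symm d3w2) (Ne.symm d3w3)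
        nq1 nq2 nqw2 nqw3 nq3
        (by rw [hP1, h3a]; exact fun h => hαδ h.symm)
        (by rw [hP1]; exact hαδ)
        (by rw [hsym w₃ (q 0), h4a]; exact fun h => hαδ h.symm)
        (by rw [hsym w₃ (q 0), h4a]; exact fun h => hγα h.symm)
        hCu3 (hDgen u₃ nq3 hCu3) (fun h => absurd h (by omega))
      exact ⟨p, h0, hPC, Or.inl (by rw [hfe]), fun x => (hcov x).trans (permE _ _ _ _ _ _)⟩
    · -- insert u₂
      obtain ⟨p, h0, hPC, hfe, hcov⟩ := lemB n c hsym t q hqPC j hj1 hjt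
        u₁ u₃ w₃ w₂ u₂
        d13 d1w3 d1w2 d12 d3w3 d3w2 d23.symm dw.symm (Ne.symm d2w3) (Ne.symm d2w2)
        nq1 nq3 nqw3 nqw2 nq2
        (by rw [hP2, h3b]; exact fun h => hαδ h.symm)
        (by rw [hP2, hsym w₃ w₂]; exact hαδ)
        (by rw [hsym w₃ w₂, hsym w₂ (q 0), h4b]; exact fun h => hαδ h.symm)
        (by rw [hsym w₂ (q 0), h4b]; exact fun h => hγα h.symm)
        hCu2 (hDgen u₂ nq2 hCu2) (fun _ => hb2)
      exact ⟨p, h0, hPC, Or.inr (by rw [hfe]), fun x => (hcov x).trans (permF _ _ _ _ _ _)⟩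
  · -- insert u₃
    obtain ⟨p, h0, hPC, hfe, hcov⟩ := lemB n c hsym t q hqPC j hj1 hjt
      u₁ u₂ w₂ w₃ u₃
      d12 d1w2 d1w3 d13 d2w2 d2w3 d23 dw (Ne.symm d3w2) (Ne.symm d3w3)
      nq1 nq2 nqw2 nqw3 nq3
      (by rw [hP1, h3a]; exact fun h => hαδ h.symm)
      (by rw [hP1]; exact hαδ)
      (by rw [hsym w₃ (q 0), h4a]; exact fun h => hαδ h.symm)
      (by rw [hsym w₃ (q 0), h4a]; exact fun h => hγα h.symm)
      hCu3 (hDgen u₃ nq3 hCu3) (fun _ => hb3)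
    exact ⟨p, h0, hPC, Or.inl (by rw [hfe]), fun x => (hcov x).trans (permE _ _ _ _ _ _)⟩

end Lemmas
lemma perm5a (a b c d e : Prop) : (a ∨ c ∨ b ∨ d ∨ e) ↔ (a ∨ b ∨ c ∨ d ∨ e) := by tauto
lemma perm5b (a b c d e : Prop) : (a ∨ b ∨ c ∨ e ∨ d) ↔ (a ∨ b ∨ c ∨ d ∨ e) := by tauto
lemma perm5c (a b c d e : Prop) : (a ∨ c ∨ b ∨ e ∨ d) ↔ (a ∨ b ∨ c ∨ d ∨ e) := by tauto
lemma perm5d (a b c d e : Prop) : (a ∨ b ∨ d ∨ c ∨ e) ↔ (a ∨ b ∨ c ∨ d ∨ e) := by tauto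
lemma perm5e (a b c d e : Prop) : (a ∨ b ∨ e ∨ c ∨ d) ↔ (a ∨ b ∨ c ∨ d ∨ e) := by tauto
lemma perm4a (a b c d : Prop) : (a ∨ c ∨ b ∨ d) ↔ (a ∨ b ∨ c ∨ d) := by tauto

set_option maxHeartbeats 1000000 in
lemma pairCase (n : ℕ) (c : Fin n → Fin n → ℕ)
    (hsym : ∀ u v, c u v = c v u) (hmono : MonoC3Free n c)
    (u₁ u₂ u₃ y z : Fin n)
    (h12 : u₁ ≠ u₂) (h13 : u₁ ≠ u₃) (h23 : u₂ ≠ u₃)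
    (d1y : u₁ ≠ y) (d2y : u₂ ≠ y) (d3y : u₃ ≠ y)
    (d1z : u₁ ≠ z) (d2z : u₂ ≠ z) (d3z : u₃ ≠ z) (hyz : y ≠ z)
    (hcen1 : c u₂ u₃ ≠ c u₁ u₂) (hcen2 : c u₂ u₃ ≠ c u₁ u₃) :
    ∃ p : ℕ → Fin n, p 0 = u₁ ∧ IsPCPath n c p 5 ∧
      (c (p 0) (p 1) = c u₁ u₂ ∨ c (p 0) (p 1) = c u₁ u₃) ∧
      ∀ x : Fin n, (∃ j < 5, p j = x) ↔
        (x = u₁ ∨ x = u₂ ∨ x = u₃ ∨ x = y ∨ x = z) := by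
  classical
  by_cases e3y : c u₃ y ≠ c u₂ u₃ ∧ c u₃ y ≠ c y z
  · obtain ⟨p, hp0, hPC, hfe, hcov⟩ := lemS5 n c u₁ u₂ u₃ y z
      h12 h13 d1y d1z h23 d2y d2z d3y d3z hyz
      (fun h => hcen1 h.symm) (Ne.symm e3y.1) e3y.2
    exact ⟨p, hp0, hPC, Or.inl hfe, hcov⟩
  by_cases e2y : c u₂ y ≠ c u₂ u₃ ∧ c u₂ y ≠ c y z
  · obtain ⟨p, hp0, hPC, hfe, hcov⟩ := lemS5 n c u₁ u₃ u₂ y z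
      h13 h12 d1y d1z h23.symm d3y d3z d2y d2z hyz
      (by rw [hsym u₃ u₂]; exact fun h => hcen2 h.symm)
      (by rw [hsym u₃ u₂]; exact Ne.symm e2y.1) e2y.2
    exact ⟨p, hp0, hPC, Or.inr hfe, fun x => (hcov x).trans (perm5a _ _ _ _ _)⟩
  by_cases e3z : c u₃ z ≠ c u₂ u₃ ∧ c u₃ z ≠ c y z
  · obtain ⟨p, hp0, hPC, hfe, hcov⟩ := lemS5 n c u₁ u₂ u₃ z y
      h12 h13 d1z d1y h23 d2z d2y d3z d3y (Ne.symm hyz)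
      (fun h => hcen1 h.symm) (Ne.symm e3z.1)
      (by rw [hsym z y]; exact e3z.2)
    exact ⟨p, hp0, hPC, Or.inl hfe, fun x => (hcov x).trans (perm5b _ _ _ _ _)⟩
  by_cases e2z : c u₂ z ≠ c u₂ u₃ ∧ c u₂ z ≠ c y z
  · obtain ⟨p, hp0, hPC, hfe, hcov⟩ := lemS5 n c u₁ u₃ u₂ z y
      h13 h12 d1z d1y h23.symm d3z d3y d2z d2y (Ne.symm hyz)
      (by rw [hsym u₃ u₂]; exact fun h => hcen2 h.symm)
      (by rw [hsym u₃ u₂]; exact Ne.symm e2z.1)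
      (by rw [hsym z y]; exact e2z.2)
    exact ⟨p, hp0, hPC, Or.inr hfe, fun x => (hcov x).trans (perm5c _ _ _ _ _)⟩
  push_neg at e3y e2y e3z e2z
  have hαβ : c u₂ u₃ ≠ c y z := by
    intro h
    have h2 : c u₂ y = c u₂ u₃ := by
      by_cases hh : c u₂ y = c u₂ u₃
      · exact hh
      · rw [e2y hh]; exact h.symm
    have h3 : c u₃ y = c u₂ u₃ := by
      by_cases hh : c u₃ y = c u₂ u₃
      · exact hh
      · rw [e3y hh]; exact h.symm
    exact hmono u₂ u₃ y h23 d3y d2y ⟨h3.symm, h2.symm⟩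
  by_cases hQ : c u₂ y = c u₂ u₃
  · have h3y : c u₃ y = c y z := by
      apply e3y
      intro h
      exact hmono u₂ u₃ y h23 d3y d2y ⟨h.symm, hQ.symm⟩
    have h3z : c u₃ z = c u₂ u₃ := by
      by_contra hne
      have hb : c u₃ z = c y z := e3z hne
      exact hmono u₃ y z d3y hyz d3z ⟨h3y, h3y.trans hb.symm⟩
    obtain ⟨p, hp0, hPC, hfe, hcov⟩ := lemS5 n c u₁ u₂ y u₃ z
      h12 d1y h13 d1z d2y h23 d2z (Ne.symm d3y) hyz d3z
      (by rw [hQ]; exact fun h => hcen1 h.symm)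
      (by rw [hQ, hsym y u₃, h3y]; exact hαβ)
      (by rw [hsym y u₃, h3y, h3z]; exact Ne.symm hαβ)
    exact ⟨p, hp0, hPC, Or.inl hfe, fun x => (hcov x).trans (perm5d _ _ _ _ _)⟩
  · have h2y : c u₂ y = c y z := e2y hQ
    have h2z : c u₂ z = c u₂ u₃ := by
      by_contra hne
      have hb : c u₂ z = c y z := e2z hne
      exact hmono u₂ y z d2y hyz d2z ⟨h2y, h2y.trans hb.symm⟩
    have h3z : c u₃ z = c y z := by
      apply e3z
      intro h
      exact hmono u₂ u₃ z h23 d3z d2z ⟨h.symm, h2z.symm⟩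
    obtain ⟨p, hp0, hPC, hfe, hcov⟩ := lemS5 n c u₁ u₂ z u₃ y
      h12 d1z h13 d1y d2z h23 d2y (Ne.symm d3z) (Ne.symm hyz) d3y
      (by rw [h2z]; exact fun h => hcen1 h.symm)
      (by rw [h2z, hsym z u₃, h3z]; exact hαβ)
      (by rw [hsym z u₃, h3z]; intro h
          have h3y : c u₃ y = c u₂ u₃ := by
            by_contra hne
            have hb : c u₃ y = c y z := e3y hne
            exact hmono u₃ y z d3y hyz d3z ⟨hb, hb.trans h3z.symm⟩
          rw [h3y] at h
          exact hαβ h.symm)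
    exact ⟨p, hp0, hPC, Or.inl hfe, fun x => (hcov x).trans (perm5e _ _ _ _ _)⟩
lemma covYe (a b c d e f g : Prop) (h : g ↔ (d ∨ e ∨ f)) :
    (a ∨ b ∨ c ∨ d ∨ e ∨ f) ↔ (a ∨ b ∨ c ∨ g) := by rw [h]
lemma covYf (a b c d e f g : Prop) (h : g ↔ (d ∨ e ∨ f)) :
    (a ∨ b ∨ c ∨ e ∨ d ∨ f) ↔ (a ∨ b ∨ c ∨ g) := by rw [h]; tauto
lemma covYg (a b c d e f g : Prop) (h : g ↔ (d ∨ e ∨ f)) :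
    (a ∨ c ∨ b ∨ d ∨ e ∨ f) ↔ (a ∨ b ∨ c ∨ g) := by rw [h]; tauto
lemma covYh (a b c d e f g : Prop) (h : g ↔ (d ∨ e ∨ f)) :
    (a ∨ c ∨ b ∨ e ∨ d ∨ f) ↔ (a ∨ b ∨ c ∨ g) := by rw [h]; tauto


set_option maxHeartbeats 1000000 in
/-- Let `G` be a mono-`C3`-free edge-colored `K_n`.  Let `S` and `Y` be
vertex-disjoint subgraphs of `G`, where `S = u₁u₂u₃u₁` is a triangle with `u₂u₃` a center
edge and `Y` (with vertex set the finset `Y`) is either a vertex set of size at most `2`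
or a nice shovel.  Then `G` contains a properly colored path `P` starting at `u₁`, with
vertex set `V(S) ∪ V(Y)`, whose first edge has color `col(u₁u₂)` or `col(u₁u₃)`. -/
theorem pc_path_through_triangle_and_shovel (n : ℕ) (c : Fin n → Fin n → ℕ)
    (hsym : ∀ u v, c u v = c v u) (hmono : MonoC3Free n c)
    (u₁ u₂ u₃ : Fin n) (h12 : u₁ ≠ u₂) (h13 : u₁ ≠ u₃) (h23 : u₂ ≠ u₃)
    (hcen : c u₂ u₃ ≠ c u₁ u₂ ∧ c u₂ u₃ ≠ c u₁ u₃)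
    (Y : Finset (Fin n)) (hd1 : u₁ ∉ Y) (hd2 : u₂ ∉ Y) (hd3 : u₃ ∉ Y)
    (hY : Y.card ≤ 2 ∨
      ∃ (t : ℕ) (q : ℕ → Fin n) (w₂ w₃ : Fin n), IsNiceShovel n c t q w₂ w₃ ∧
        ∀ x : Fin n, x ∈ Y ↔ (x = w₂ ∨ x = w₃ ∨ ∃ j < t, q j = x)) :
    ∃ p : ℕ → Fin n, p 0 = u₁ ∧ IsPCPath n c p (3 + Y.card) ∧
      (c (p 0) (p 1) = c u₁ u₂ ∨ c (p 0) (p 1) = c u₁ u₃) ∧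
      ∀ x : Fin n, (∃ j < 3 + Y.card, p j = x) ↔ (x = u₁ ∨ x = u₂ ∨ x = u₃ ∨ x ∈ Y) := by
  classical
  obtain ⟨hcen1, hcen2⟩ := hcen
  rcases hY with hsmall | ⟨t, q, w₂, w₃, ⟨ht, hw23, hqw, hqPC, hs1, hs2, hnice⟩, hYc⟩
  · -- |Y| ≤ 2
    obtain h0 | h1 | h2 : Y.card = 0 ∨ Y.card = 1 ∨ Y.card = 2 := by omega
    · -- Y = ∅
      rw [Finset.card_eq_zero] at h0
      subst h0
      obtain ⟨p, hp0, hPC, hfe, hcov⟩ := lemS3 n c u₁ u₂ u₃ h12 h13 h23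
        (fun h => hcen1 h.symm)
      refine ⟨p, hp0, by simpa using hPC, Or.inl hfe, fun x => ?_⟩
      simp only [Finset.card_empty, Finset.notMem_empty, or_false]
      rw [show (3:ℕ) + 0 = 3 by rfl]
      exact hcov x
    · -- Y = {y}
      obtain ⟨y, hy⟩ := Finset.card_eq_one.mp h1
      subst hy
      have d1y : u₁ ≠ y := fun h => hd1 (by simp [h])
      have d2y : u₂ ≠ y := fun h => hd2 (by simp [h])
      have d3y : u₃ ≠ y := fun h => hd3 (by simp [h])
      by_cases hA : c u₃ y = c u₂ u₃
      · -- use u1 u3 u2 y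
        have h2y : c u₂ y ≠ c u₂ u₃ := by
          intro h
          exact hmono u₂ u₃ y h23 d3y d2y ⟨hA.symm, h.symm⟩
        obtain ⟨p, hp0, hPC, hfe, hcov⟩ := lemS4 n c u₁ u₃ u₂ y
          h13 h12 d1y h23.symm d3y d2y
          (by rw [hsym u₃ u₂]; exact fun h => hcen2 h.symm)
          (by rw [hsym u₃ u₂]; exact Ne.symm h2y)
        refine ⟨p, hp0, by simpa using hPC, Or.inr hfe, fun x => ?_⟩
        simp only [Finset.card_singleton, Finset.mem_singleton]
        rw [show (3:ℕ) + 1 = 4 by rfl]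
        exact (hcov x).trans (perm4a _ _ _ _)
      · obtain ⟨p, hp0, hPC, hfe, hcov⟩ := lemS4 n c u₁ u₂ u₃ y
          h12 h13 d1y h23 d2y d3y
          (fun h => hcen1 h.symm) (Ne.symm hA)
        refine ⟨p, hp0, by simpa using hPC, Or.inl hfe, fun x => ?_⟩
        simp only [Finset.card_singleton, Finset.mem_singleton]
        rw [show (3:ℕ) + 1 = 4 by rfl]
        exact hcov x
    · -- Y = {y, z}
      obtain ⟨y, z, hyz, hY2⟩ := Finset.card_eq_two.mp h2
      subst hY2
      have d1y : u₁ ≠ y := fun h => hd1 (by simp [h])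
      have d2y : u₂ ≠ y := fun h => hd2 (by simp [h])
      have d3y : u₃ ≠ y := fun h => hd3 (by simp [h])
      have d1z : u₁ ≠ z := fun h => hd1 (by simp [h])
      have d2z : u₂ ≠ z := fun h => hd2 (by simp [h])
      have d3z : u₃ ≠ z := fun h => hd3 (by simp [h])
      obtain ⟨p, hp0, hPC, hfe, hcov⟩ := pairCase n c hsym hmono u₁ u₂ u₃ y z
        h12 h13 h23 d1y d2y d3y d1z d2z d3z hyz hcen1 hcen2
      have hcard : ({y, z} : Finset (Fin n)).card = 2 := Finset.card_pair hyz
      rw [hcard]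
      refine ⟨p, hp0, by simpa using hPC, hfe, fun x => ?_⟩
      rw [show (3:ℕ) + 2 = 5 by rfl]
      refine (hcov x).trans ?_
      simp only [Finset.mem_insert, Finset.mem_singleton]
  · -- shovel case
    have hw2Y : w₂ ∈ Y := (hYc w₂).mpr (Or.inl rfl)
    have hw3Y : w₃ ∈ Y := (hYc w₃).mpr (Or.inr (Or.inl rfl))
    have hqY : ∀ i < t, q i ∈ Y := fun i hi => (hYc _).mpr (Or.inr (Or.inr ⟨i, hi, rfl⟩))
    have d1w2 : u₁ ≠ w₂ := fun h => hd1 (h ▸ hw2Y)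
    have d1w3 : u₁ ≠ w₃ := fun h => hd1 (h ▸ hw3Y)
    have d2w2 : u₂ ≠ w₂ := fun h => hd2 (h ▸ hw2Y)
    have d2w3 : u₂ ≠ w₃ := fun h => hd2 (h ▸ hw3Y)
    have d3w2 : u₃ ≠ w₂ := fun h => hd3 (h ▸ hw2Y)
    have d3w3 : u₃ ≠ w₃ := fun h => hd3 (h ▸ hw3Y)
    have nq1 : ∀ i < t, q i ≠ u₁ := fun i hi h => hd1 (h ▸ hqY i hi)
    have nq2 : ∀ i < t, q i ≠ u₂ := fun i hi h => hd2 (h ▸ hqY i hi)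
    have nq3 : ∀ i < t, q i ≠ u₃ := fun i hi h => hd3 (h ▸ hqY i hi)
    have nqw2 : ∀ i < t, q i ≠ w₂ := fun i hi => (hqw i hi).1
    have nqw3 : ∀ i < t, q i ≠ w₃ := fun i hi => (hqw i hi).2
    -- Y.card = t + 2
    have hYeq : Y = insert w₂ (insert w₃ ((Finset.range t).image q)) := by
      ext x
      rw [hYc x]
      simp only [Finset.mem_insert, Finset.mem_image, Finset.mem_range]
    have hYcard : Y.card = t + 2 := by
      rw [hYeq]
      rw [Finset.card_insert_of_notMem, Finset.card_insert_of_notMem,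
        Finset.card_image_of_injOn, Finset.card_range]
      · rw [Finset.coe_range]
        exact hqPC.1
      · simp only [Finset.mem_image, Finset.mem_range, not_exists]
        rintro i ⟨hi, h⟩
        exact nqw3 i hi h
      · simp only [Finset.mem_insert, Finset.mem_image, Finset.mem_range, not_or, not_exists]
        exact ⟨hw23, by rintro i ⟨hi, h⟩; exact nqw2 i hi h⟩
    have h35 : 3 + Y.card = t + 5 := by omega
    rw [h35]
    have hcovY : ∀ x : Fin n, (x = u₁ ∨ x = u₂ ∨ x = u₃ ∨ x = w₂ ∨ x = w₃ ∨ ∃ j < t, q j = x)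
        ↔ (x = u₁ ∨ x = u₂ ∨ x = u₃ ∨ x ∈ Y) :=
      fun x => covYe _ _ _ _ _ _ _ (hYc x)
    -- Step 1: Form A for each of the four cross edges
    by_cases hx1 : c u₃ w₂ ≠ c u₂ u₃ ∧ c u₃ w₂ ≠ c w₂ w₃
    · obtain ⟨p, hp0, hPC, hfe, hcov⟩ := lemA n c t ht q hqPC u₁ u₂ u₃ w₂ w₃
        h12 h13 d1w2 d1w3 h23 d2w2 d2w3 d3w2 d3w3 hw23
        nq1 nq2 nq3 nqw2 nqw3
        (fun h => hcen1 h.symm) (Ne.symm hx1.1) hx1.2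
        (by rw [hsym w₃ (q 0)]; exact hs2)
        (fun h2 => by rw [hsym w₃ (q 0)]; exact fun h => (hnice h2).2 h.symm)
      exact ⟨p, hp0, hPC, Or.inl hfe, fun x => (hcov x).trans (hcovY x)⟩
    by_cases hx2 : c u₃ w₃ ≠ c u₂ u₃ ∧ c u₃ w₃ ≠ c w₂ w₃
    · obtain ⟨p, hp0, hPC, hfe, hcov⟩ := lemA n c t ht q hqPC u₁ u₂ u₃ w₃ w₂
        h12 h13 d1w3 d1w2 h23 d2w3 d2w2 d3w3 d3w2 hw23.symm
        nq1 nq2 nq3 nqw3 nqw2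
        (fun h => hcen1 h.symm) (Ne.symm hx2.1)
        (by rw [hsym w₃ w₂]; exact hx2.2)
        (by rw [hsym w₃ w₂, hsym w₂ (q 0)]; exact hs1)
        (fun h2 => by rw [hsym w₂ (q 0)]; exact fun h => (hnice h2).1 h.symm)
      refine ⟨p, hp0, hPC, Or.inl hfe, fun x => (hcov x).trans ?_⟩
      exact (covYf _ _ _ _ _ _ _ (hYc x))
    by_cases hx3 : c u₂ w₂ ≠ c u₂ u₃ ∧ c u₂ w₂ ≠ c w₂ w₃
    · obtain ⟨p, hp0, hPC, hfe, hcov⟩ := lemA n c t ht q hqPC u₁ u₃ u₂ w₂ w₃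
        h13 h12 d1w2 d1w3 h23.symm d3w2 d3w3 d2w2 d2w3 hw23
        nq1 nq3 nq2 nqw2 nqw3
        (by rw [hsym u₃ u₂]; exact fun h => hcen2 h.symm)
        (by rw [hsym u₃ u₂]; exact Ne.symm hx3.1) hx3.2
        (by rw [hsym w₃ (q 0)]; exact hs2)
        (fun h2 => by rw [hsym w₃ (q 0)]; exact fun h => (hnice h2).2 h.symm)
      refine ⟨p, hp0, hPC, Or.inr hfe, fun x => (hcov x).trans ?_⟩
      exact (covYg _ _ _ _ _ _ _ (hYc x))
    by_cases hx4 : c u₂ w₃ ≠ c u₂ u₃ ∧ c u₂ w₃ ≠ c w₂ w₃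
    · obtain ⟨p, hp0, hPC, hfe, hcov⟩ := lemA n c t ht q hqPC u₁ u₃ u₂ w₃ w₂
        h13 h12 d1w3 d1w2 h23.symm d3w3 d3w2 d2w3 d2w2 hw23.symm
        nq1 nq3 nq2 nqw3 nqw2
        (by rw [hsym u₃ u₂]; exact fun h => hcen2 h.symm)
        (by rw [hsym u₃ u₂]; exact Ne.symm hx4.1)
        (by rw [hsym w₃ w₂]; exact hx4.2)
        (by rw [hsym w₃ w₂, hsym w₂ (q 0)]; exact hs1)
        (fun h2 => by rw [hsym w₂ (q 0)]; exact fun h => (hnice h2).1 h.symm)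
      refine ⟨p, hp0, hPC, Or.inr hfe, fun x => (hcov x).trans ?_⟩
      exact (covYh _ _ _ _ _ _ _ (hYc x))
    push_neg at hx1 hx2 hx3 hx4
    -- all cross edges in {α, δ}; derive α ≠ δ
    have hαδ : c u₂ u₃ ≠ c w₂ w₃ := by
      intro h
      have h2 : c u₂ w₂ = c u₂ u₃ := by
        by_cases hh : c u₂ w₂ = c u₂ u₃
        · exact hh
        · rw [hx3 hh]; exact h.symm
      have h3 : c u₃ w₂ = c u₂ u₃ := by
        by_cases hh : c u₃ w₂ = c u₂ u₃
        · exact hh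
        · rw [hx1 hh]; exact h.symm
      exact hmono u₂ u₃ w₂ h23 d3w2 d2w2 ⟨h3.symm, h2.symm⟩
    by_cases hw : c u₂ w₂ = c u₂ u₃
    · -- pattern P1 with (w₂, w₃)
      have hp4 : c u₃ w₂ = c w₂ w₃ := by
        apply hx1
        intro h
        exact hmono u₂ u₃ w₂ h23 d3w2 d2w2 ⟨h.symm, hw.symm⟩
      have hp2 : c u₃ w₃ = c u₂ u₃ := by
        by_contra hne
        have hb : c u₃ w₃ = c w₂ w₃ := hx2 hne
        exact hmono u₃ w₂ w₃ d3w2 hw23 d3w3 ⟨hp4, hp4.trans hb.symm⟩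
      have hp3 : c u₂ w₃ = c w₂ w₃ := by
        apply hx4
        intro h
        exact hmono u₂ u₃ w₃ h23 d3w3 d2w3 ⟨hp2.symm, h.symm⟩
      obtain ⟨p, hp0, hPC, hfe, hcov⟩ := aux_main n c hsym hmono u₁ u₂ u₃ w₂ w₃ t ht q hqPC
        h12 h13 h23 hw23 d1w2 d1w3 d2w2 d2w3 d3w2 d3w3
        nq1 nq2 nq3 nqw2 nqw3 hcen1 hcen2 hs1 hs2 hnice
        hw hp2 hp3 hp4 hαδ
      exact ⟨p, hp0, hPC, hfe, fun x => (hcov x).trans (hcovY x)⟩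
    · -- c u₂ w₂ = δ : pattern P1 with (w₃, w₂)
      have hw' : c u₂ w₂ = c w₂ w₃ := hx3 hw
      have hp3' : c u₂ w₃ = c u₂ u₃ := by
        by_contra hne
        have hb : c u₂ w₃ = c w₂ w₃ := hx4 hne
        exact hmono u₂ w₂ w₃ d2w2 hw23 d2w3 ⟨hw', hw'.trans hb.symm⟩
      have hp2' : c u₃ w₃ = c w₂ w₃ := by
        apply hx2
        intro h
        exact hmono u₂ u₃ w₃ h23 d3w3 d2w3 ⟨h.symm, hp3'.symm⟩
      have hp4' : c u₃ w₂ = c u₂ u₃ := by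
        by_contra hne
        have hb : c u₃ w₂ = c w₂ w₃ := hx1 hne
        exact hmono u₃ w₃ w₂ d3w3 hw23.symm d3w2
          ⟨by rw [hsym w₃ w₂]; exact hp2', hp2'.trans hb.symm⟩
      obtain ⟨p, hp0, hPC, hfe, hcov⟩ := aux_main n c hsym hmono u₁ u₂ u₃ w₃ w₂ t ht q hqPC
        h12 h13 h23 hw23.symm d1w3 d1w2 d2w3 d2w2 d3w3 d3w2
        nq1 nq2 nq3 nqw3 nqw2 hcen1 hcen2
        (by rw [hsym w₃ w₂]; exact hs2) (by rw [hsym w₃ w₂]; exact hs1)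
        (fun h2 => ⟨(hnice h2).2, (hnice h2).1⟩)
        hp3' hp4' (by rw [hsym w₃ w₂]; exact hw') (by rw [hsym w₃ w₂]; exact hp2')
        (by rw [hsym w₃ w₂]; exact hαδ)
      refine ⟨p, hp0, hPC, hfe, fun x => (hcov x).trans ?_⟩
      exact (covYf _ _ _ _ _ _ _ (hYc x))
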